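/- Let (A, ·) be a finite-dimensional nonzero commutative real algebra with nontrivial multiplication on which a connected Lie group G with simple Lie algebra acts irreducibly by algebra automorphisms. Then A is simple: it has no ideals other than {0} and A. -/

import Mathlib

open Module

theorem aux_simple_of_irreducible
    {A : Type*} [NormedAddCommGroup A] [NormedSpace ℝ A] [FiniteDimensional ℝ A]
    {G : Type*} [Group G] [TopologicalSpace G] [ConnectedSpace G]
    (mul : A →ₗ[ℝ] A →ₗ[ℝ] A)
    (hcomm : ∀ x y : A, mul x y = mul y x)
    (hnontriv : ∃ x y : A, mul x y ≠ 0)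
    (ρ : G →* (A ≃ₗ[ℝ] A))
    (hcont : Continuous fun p : G × A => ρ p.1 p.2)
    (hauto : ∀ (g : G) (x y : A), ρ g (mul x y) = mul (ρ g x) (ρ g y))
    (hirr : ∀ W : Submodule ℝ A, (∀ g : G, ∀ x ∈ W, ρ g x ∈ W) → W = ⊥ ∨ W = ⊤) :
    ∀ J : Submodule ℝ A, (∀ x : A, ∀ y ∈ J, mul x y ∈ J) → J = ⊥ ∨ J = ⊤ := by
  classical
  intro J hJ
  rcases eq_or_ne J ⊥ with hJbot | hJbot
  · exact Or.inl hJbot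
  right
  -- translation of products under ρ
  have key : ∀ (g : G) (x y : A), mul x (ρ g y) = ρ g (mul ((ρ g).symm x) y) := by
    intro g x y
    conv_lhs => rw [← (ρ g).apply_symm_apply x]
    rw [← hauto]
  -- the annihilator is ⊥
  have annMem : ∀ a : A, (a ∈ ⨅ x : A, LinearMap.ker (mul x)) ↔ ∀ x : A, mul x a = 0 := by
    intro a; simp [Submodule.mem_iInf, LinearMap.mem_ker]
  have hAnnInv : ∀ g : G, ∀ a ∈ (⨅ x : A, LinearMap.ker (mul x)),
      ρ g a ∈ (⨅ x : A, LinearMap.ker (mul x)) := by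
    intro g a ha
    rw [annMem] at ha ⊢
    intro x
    rw [key g x a, ha, map_zero]
  have hann0 : ∀ a : A, (∀ x : A, mul x a = 0) → a = 0 := by
    intro a ha
    have hAnn : (⨅ x : A, LinearMap.ker (mul x)) = ⊥ := by
      rcases hirr _ hAnnInv with h | h
      · exact h
      · exfalso
        obtain ⟨x, y, hxy⟩ := hnontriv
        exact hxy ((annMem y).mp (by rw [h]; trivial) x)
    have hm : a ∈ (⨅ x : A, LinearMap.ker (mul x)) := (annMem a).mpr ha
    rwa [hAnn, Submodule.mem_bot] at hm
  -- minimal dimension of a nonzero ideal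
  have hex : ∃ n : ℕ, ∃ K : Submodule ℝ A,
      ((∀ x : A, ∀ y ∈ K, mul x y ∈ K) ∧ K ≠ ⊥) ∧ finrank ℝ K = n :=
    ⟨finrank ℝ J, J, ⟨hJ, hJbot⟩, rfl⟩
  set d := Nat.find hex with hd
  set 𝓜 : Set (Submodule ℝ A) :=
    {K | (∀ x : A, ∀ y ∈ K, mul x y ∈ K) ∧ K ≠ ⊥ ∧ finrank ℝ K = d} with h𝓜
  obtain ⟨I0, ⟨hI0idl, hI0bot⟩, hI0rank⟩ := Nat.find_spec hex
  have hI0 : I0 ∈ 𝓜 := ⟨hI0idl, hI0bot, hI0rank⟩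
  have hdle : ∀ K : Submodule ℝ A, (∀ x : A, ∀ y ∈ K, mul x y ∈ K) → K ≠ ⊥ →
      d ≤ finrank ℝ K :=
    fun K h1 h2 => Nat.find_min' hex ⟨K, ⟨h1, h2⟩, rfl⟩
  -- distinct minimal ideals are disjoint
  have hdisj : ∀ K ∈ 𝓜, ∀ K' ∈ 𝓜, K ≠ K' → K ⊓ K' = ⊥ := by
    intro K hK K' hK' hne
    by_contra hbot
    have hidl : ∀ x : A, ∀ y ∈ K ⊓ K', mul x y ∈ K ⊓ K' := fun x y hy =>
      ⟨hK.1 x y hy.1, hK'.1 x y hy.2⟩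
    have h1 : d ≤ finrank ℝ (K ⊓ K' : Submodule ℝ A) := hdle _ hidl hbot
    have h2 : K ⊓ K' = K :=
      Submodule.eq_of_le_of_finrank_le inf_le_left (by rw [hK.2.2]; exact h1)
    have h3 : K ⊓ K' = K' :=
      Submodule.eq_of_le_of_finrank_le inf_le_right (by rw [hK'.2.2]; exact h1)
    exact hne (h2.symm.trans h3)
  -- distinct minimal ideals annihilate each other
  have hzero : ∀ K ∈ 𝓜, ∀ K' ∈ 𝓜, K ≠ K' → ∀ y ∈ K, ∀ z ∈ K', mul y z = 0 := by
    intro K hK K' hK' hne y hy z hz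
    have h1 : mul y z ∈ K' := hK'.1 y z hz
    have h2 : mul y z ∈ K := by rw [hcomm]; exact hK.1 z y hy
    have h3 : mul y z ∈ K ⊓ K' := ⟨h2, h1⟩
    rwa [hdisj K hK K' hK' hne, Submodule.mem_bot] at h3
  -- ρ g maps minimal ideals to minimal ideals
  have hmap : ∀ g : G, ∀ K ∈ 𝓜, K.map (ρ g : A →ₗ[ℝ] A) ∈ 𝓜 := by
    intro g K hK
    refine ⟨?_, ?_, ?_⟩
    · intro x y hy
      rcases Submodule.mem_map.mp hy with ⟨z, hz, rfl⟩
      refine Submodule.mem_map.mpr ⟨mul ((ρ g).symm x) z, hK.1 _ z hz, ?_⟩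
      simp only [LinearEquiv.coe_coe]
      rw [hauto g ((ρ g).symm x) z, (ρ g).apply_symm_apply]
    · obtain ⟨b, hb, hb0⟩ := Submodule.exists_mem_ne_zero_of_ne_bot hK.2.1
      refine (Submodule.ne_bot_iff _).mpr ⟨ρ g b, Submodule.mem_map.mpr ⟨b, hb, rfl⟩, ?_⟩
      exact (ρ g).map_ne_zero_iff.mpr hb0
    · rw [LinearEquiv.finrank_map_eq]; exact hK.2.2
  -- the span of all minimal ideals is everything
  have hMinv : ∀ g : G, ∀ x ∈ (⨆ K : 𝓜, (K : Submodule ℝ A)),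
      ρ g x ∈ (⨆ K : 𝓜, (K : Submodule ℝ A)) := by
    intro g x hx
    have hle : (⨆ K : 𝓜, (K : Submodule ℝ A)).map (ρ g : A →ₗ[ℝ] A)
        ≤ ⨆ K : 𝓜, (K : Submodule ℝ A) := by
      rw [Submodule.map_iSup]
      exact iSup_le fun K =>
        le_iSup_of_le ⟨(K : Submodule ℝ A).map (ρ g : A →ₗ[ℝ] A), hmap g K.1 K.2⟩ le_rfl
    exact hle (Submodule.mem_map.mpr ⟨x, hx, rfl⟩)
  have hMtop : (⨆ K : 𝓜, (K : Submodule ℝ A)) = ⊤ := by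
    rcases hirr _ hMinv with h | h
    · exfalso
      apply hI0bot
      rw [← le_bot_iff, ← h]
      exact le_iSup_of_le ⟨I0, hI0⟩ le_rfl
    · exact h
  -- the family of minimal ideals is independent
  have hindep : iSupIndep (fun K : 𝓜 => (K : Submodule ℝ A)) := by
    intro K
    rw [Submodule.disjoint_def]
    intro x hxK hxS
    refine hann0 x fun y => ?_
    have hy : y ∈ (⨆ K : 𝓜, (K : Submodule ℝ A)) := by rw [hMtop]; trivial
    have hker : (⨆ K : 𝓜, (K : Submodule ℝ A)) ≤ LinearMap.ker (mul.flip x) := by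
      refine iSup_le fun K' => ?_
      rcases eq_or_ne K' K with rfl | hne
      · intro z hz
        rw [LinearMap.mem_ker]
        show mul z x = 0
        have hle : (⨆ (j : 𝓜) (_ : j ≠ K'), (j : Submodule ℝ A))
            ≤ LinearMap.ker (mul z) := by
          refine iSup_le fun j => iSup_le fun hj => ?_
          intro w hw
          rw [LinearMap.mem_ker]
          exact hzero K'.1 K'.2 j.1 j.2 (fun hc => hj (Subtype.ext hc.symm)) z hz w hw
        have hx0 := hle hxS
        rwa [LinearMap.mem_ker] at hx0
      · intro z hz
        rw [LinearMap.mem_ker]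
        show mul z x = 0
        exact hzero K'.1 K'.2 K.1 K.2 (fun hc => hne (Subtype.ext hc)) z hz x hxK
    have hx0 := hker hy
    rwa [LinearMap.mem_ker] at hx0
  -- hence there are finitely many minimal ideals
  have hfin : 𝓜.Finite := by
    rw [← Set.finite_coe_iff]
    have hv : ∀ K : 𝓜, ∃ b : A, b ∈ (K : Submodule ℝ A) ∧ b ≠ 0 :=
      fun K => Submodule.exists_mem_ne_zero_of_ne_bot K.2.2.1
    choose v hv1 hv2 using hv
    exact (hindep.linearIndependent _ hv1 hv2).finite_of_isNoetherian
  -- the sets "g sends I0 into K" are closed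
  have hCclosed : ∀ K : Submodule ℝ A, IsClosed {g : G | ∀ x ∈ I0, ρ g x ∈ K} := by
    intro K
    have he : {g : G | ∀ x ∈ I0, ρ g x ∈ K} =
        ⋂ x ∈ (I0 : Set A), {g : G | ρ g x ∈ K} := by
      ext g; simp [Set.mem_iInter₂]
    rw [he]
    refine isClosed_biInter fun x _ => ?_
    have hc : Continuous fun g : G => ρ g x :=
      hcont.comp (continuous_id.prodMk continuous_const)
    exact K.closed_of_finiteDimensional.preimage hc
  have hcover : ∀ g : G, ∃ K ∈ 𝓜, g ∈ {g : G | ∀ x ∈ I0, ρ g x ∈ K} := by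
    intro g
    exact ⟨I0.map (ρ g : A →ₗ[ℝ] A), hmap g I0 hI0,
      fun x hx => Submodule.mem_map.mpr ⟨x, hx, rfl⟩⟩
  -- by connectedness, I0 is G-invariant
  have hI0inv : ∀ g : G, ∀ x ∈ I0, ρ g x ∈ I0 := by
    obtain ⟨x0, hx0, hx00⟩ := Submodule.exists_mem_ne_zero_of_ne_bot hI0bot
    have hopen : IsOpen {g : G | ∀ x ∈ I0, ρ g x ∈ I0} := by
      have hcompl : {g : G | ∀ x ∈ I0, ρ g x ∈ I0} =
          (⋃ K ∈ (𝓜 \ {I0} : Set (Submodule ℝ A)), {g : G | ∀ x ∈ I0, ρ g x ∈ K})ᶜ := by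
        ext g
        simp only [Set.mem_compl_iff]
        constructor
        · intro hg hgU
          rw [Set.mem_iUnion₂] at hgU
          obtain ⟨K, hK, hgK⟩ := hgU
          obtain ⟨hKM, hKne⟩ := hK
          have hne : I0 ≠ K := fun h => hKne (Set.mem_singleton_iff.mpr h.symm)
          have h1 : ρ g x0 ∈ I0 ⊓ K := ⟨hg x0 hx0, hgK x0 hx0⟩
          rw [hdisj I0 hI0 K hKM hne, Submodule.mem_bot] at h1
          exact hx00 ((ρ g).map_eq_zero_iff.mp h1)
        · intro hg
          obtain ⟨K, hK, hgK⟩ := hcover g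
          rcases eq_or_ne K I0 with rfl | hne
          · exact hgK
          · exact absurd (Set.mem_iUnion₂.mpr ⟨K, ⟨hK, hne⟩, hgK⟩) hg
      rw [hcompl]
      exact (Set.Finite.isClosed_biUnion hfin.diff
        fun K _ => hCclosed K).isOpen_compl
    have hone : (1 : G) ∈ {g : G | ∀ x ∈ I0, ρ g x ∈ I0} := by
      intro x hx
      rw [map_one]
      simpa using hx
    have huniv := IsClopen.eq_univ ⟨hCclosed I0, hopen⟩ ⟨1, hone⟩
    intro g
    have hg : g ∈ {g : G | ∀ x ∈ I0, ρ g x ∈ I0} := by rw [huniv]; trivial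
    exact hg
  -- conclude
  have hI0top : I0 = ⊤ := by
    rcases hirr I0 hI0inv with h | h
    · exact absurd h hI0bot
    · exact h
  have hdA : d = finrank ℝ A := by
    rw [hd, ← hI0rank, hI0top, finrank_top]
  have h1 : finrank ℝ A ≤ finrank ℝ J := by
    rw [← hdA]; exact hdle J hJ hJbot
  exact Submodule.eq_top_of_finrank_eq (le_antisymm (Submodule.finrank_le J) h1)



/-- Let G be a connected Lie group whose Lie algebra (of left-invariant
derivations) is simple, acting continuously and irreducibly by algebra
automorphisms on a finite-dimensional nonzero commutative real algebra (A, ·)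
with nontrivial multiplication.  Then A is simple: its only ideals are {0} and A. -/
theorem simple_of_irreducible_lie_group_action
    {E : Type*} [NormedAddCommGroup E] [NormedSpace ℝ E]
    {H : Type*} [TopologicalSpace H] (I : ModelWithCorners ℝ E H)
    (G : Type*) [Group G] [TopologicalSpace G] [ChartedSpace H G]
    [LieGroup I (⊤ : ℕ∞) G] [ConnectedSpace G]
    (hsimple : LieAlgebra.IsSimple ℝ (LeftInvariantDerivation I G))
    {A : Type*} [NormedAddCommGroup A] [NormedSpace ℝ A] [FiniteDimensional ℝ A]
    (hA : Nontrivial A)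
    (mul : A →ₗ[ℝ] A →ₗ[ℝ] A)
    (hcomm : ∀ x y : A, mul x y = mul y x)
    (hnontriv : ∃ x y : A, mul x y ≠ 0)
    (ρ : G →* (A ≃ₗ[ℝ] A))
    (hcont : Continuous fun p : G × A => ρ p.1 p.2)
    (hauto : ∀ (g : G) (x y : A), ρ g (mul x y) = mul (ρ g x) (ρ g y))
    (hirr : ∀ W : Submodule ℝ A, (∀ g : G, ∀ x ∈ W, ρ g x ∈ W) → W = ⊥ ∨ W = ⊤) :
    ∀ J : Submodule ℝ A, (∀ x : A, ∀ y ∈ J, mul x y ∈ J) → J = ⊥ ∨ J = ⊤ := by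
  exact aux_simple_of_irreducible mul hcomm hnontriv ρ hcont hauto hirr
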